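/- Let Σ be a d×d real symmetric positive semidefinite matrix, Σ̃ a d×d real symmetric positive definite matrix, and P = Σ̃^{−1/2}·(Σ̃^{1/2}·Σ·Σ̃^{1/2})^{1/2}·Σ̃^{−1/2} the optimal transport map matrix. Set C* = P·Σ̃. Then the 2d×2d block matrix with blocks [[Σ, C*], [C*ᵀ, Σ̃]] is positive semidefinite, and tr(C*) = tr((Σ̃^{1/2}·Σ·Σ̃^{1/2})^{1/2}); hence C* attains the maximum of tr(C) over all C making [[Σ, C], [Cᵀ, Σ̃]] positive semidefinite. -/

import Mathlib

open Matrix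
open scoped Classical


/-- The unique positive semidefinite square root of a positive semidefinite real matrix
(junk value `0` if the matrix is not positive semidefinite). -/
noncomputable def psdSqrt {d : ℕ} (A : Matrix (Fin d) (Fin d) ℝ) : Matrix (Fin d) (Fin d) ℝ :=
  if h : A.PosSemidef then
    h.1.eigenvectorUnitary.1 * diagonal ((↑) ∘ (√·) ∘ h.1.eigenvalues) *
      (star h.1.eigenvectorUnitary : Matrix (Fin d) (Fin d) ℝ)
  else 0

/-- The optimal transport map matrix `P = Σ̃^{-1/2} (Σ̃^{1/2} Σ Σ̃^{1/2})^{1/2} Σ̃^{-1/2}`. -/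
noncomputable def otMap {d : ℕ} (S St : Matrix (Fin d) (Fin d) ℝ) :
    Matrix (Fin d) (Fin d) ℝ :=
  (psdSqrt St)⁻¹ * psdSqrt (psdSqrt St * S * psdSqrt St) * (psdSqrt St)⁻¹

namespace OTAux

lemma trace_fromBlocks' {d : ℕ} (A B C D : Matrix (Fin d) (Fin d) ℝ) :
    (Matrix.fromBlocks A B C D).trace = A.trace + D.trace := by
  simp [Matrix.trace, Matrix.diag, Fintype.sum_sum_type, Matrix.fromBlocks]

lemma psd_trace_nonneg {n : Type*} [Fintype n] {M : Matrix n n ℝ} (hM : M.PosSemidef) :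
    0 ≤ M.trace := by
  refine Finset.sum_nonneg fun i _ => ?_
  exact hM.diag_nonneg

noncomputable def specF {d : ℕ} (U : Matrix (Fin d) (Fin d) ℝ) (μ : Fin d → ℝ) (f : ℝ → ℝ) :
    Matrix (Fin d) (Fin d) ℝ :=
  U * Matrix.diagonal (fun i => f (μ i)) * Uᵀ

variable {d : ℕ} {U : Matrix (Fin d) (Fin d) ℝ} {μ : Fin d → ℝ}

lemma specF_mul (hU : Uᵀ * U = 1) (f g : ℝ → ℝ) :
    specF U μ f * specF U μ g = specF U μ (fun x => f x * g x) := by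
  unfold specF
  simp only [Matrix.mul_assoc]
  rw [← Matrix.mul_assoc Uᵀ U, hU, Matrix.one_mul,
    ← Matrix.mul_assoc (Matrix.diagonal fun i => f (μ i)), Matrix.diagonal_mul_diagonal]

lemma specF_trace (hU : Uᵀ * U = 1) (f : ℝ → ℝ) :
    (specF U μ f).trace = ∑ i, f (μ i) := by
  unfold specF
  rw [Matrix.trace_mul_cycle, hU, Matrix.one_mul, Matrix.trace_diagonal]

lemma specF_transpose (f : ℝ → ℝ) : (specF U μ f)ᵀ = specF U μ f := by
  unfold specF
  rw [Matrix.transpose_mul, Matrix.transpose_mul, Matrix.diagonal_transpose,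
    Matrix.transpose_transpose, Matrix.mul_assoc]

lemma specF_congr {f g : ℝ → ℝ} (h : ∀ i, f (μ i) = g (μ i)) :
    specF U μ f = specF U μ g := by
  unfold specF
  congr 2
  exact Matrix.diagonal_eq_diagonal_iff.mpr h

lemma specF_one (hU' : U * Uᵀ = 1) : specF U μ (fun _ => 1) = 1 := by
  unfold specF
  rw [show (Matrix.diagonal (fun i : Fin d => (1:ℝ))) = 1 from Matrix.diagonal_one,
    Matrix.mul_one, hU']

lemma psdSqrt_psd' {A : Matrix (Fin d) (Fin d) ℝ} (h : A.PosSemidef) :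
    (h.1.eigenvectorUnitary.1 * diagonal (((↑) ∘ (√·) ∘ h.1.eigenvalues : Fin d → ℝ)) *
      (star h.1.eigenvectorUnitary : Matrix (Fin d) (Fin d) ℝ)).PosSemidef :=
  (posSemidef_diagonal_iff.mpr (fun i => by simp [Real.sqrt_nonneg])).mul_mul_conjTranspose_same
    h.1.eigenvectorUnitary.1

lemma psdSqrt_sq' {A : Matrix (Fin d) (Fin d) ℝ} (h : A.PosSemidef) :
    (h.1.eigenvectorUnitary.1 * diagonal (((↑) ∘ (√·) ∘ h.1.eigenvalues : Fin d → ℝ)) *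
      (star h.1.eigenvectorUnitary : Matrix (Fin d) (Fin d) ℝ)) *
    (h.1.eigenvectorUnitary.1 * diagonal (((↑) ∘ (√·) ∘ h.1.eigenvalues : Fin d → ℝ)) *
      (star h.1.eigenvectorUnitary : Matrix (Fin d) (Fin d) ℝ)) = A := by
  have hu := Unitary.coe_star_mul_self h.1.eigenvectorUnitary
  conv_rhs => rw [h.1.spectral_theorem, Unitary.conjStarAlgAut_apply]
  simp only [Matrix.mul_assoc]
  rw [← Matrix.mul_assoc (star h.1.eigenvectorUnitary : Matrix (Fin d) (Fin d) ℝ)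
    h.1.eigenvectorUnitary.1, hu, Matrix.one_mul, ← Matrix.mul_assoc (diagonal _),
    diagonal_mul_diagonal]
  congr 3
  funext i
  simp [Real.mul_self_sqrt (h.eigenvalues_nonneg i)]

end OTAux


/-- **The cross-covariance `C* = P Σ̃` attains the trace maximum.**
For `Σ` positive semidefinite and `Σ̃` positive definite, the block matrix
`[[Σ, C*], [C*ᵀ, Σ̃]]` with `C* = P Σ̃` is positive semidefinite,
`tr C* = tr ((Σ̃^{1/2} Σ Σ̃^{1/2})^{1/2})`, and `C*` maximizes `tr C` over all `C` making
`[[Σ, C], [Cᵀ, Σ̃]]` positive semidefinite. -/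
theorem otMap_mul_attains_trace_max
    {d : ℕ} (S St : Matrix (Fin d) (Fin d) ℝ)
    (hS : S.PosSemidef) (hSt : St.PosDef) :
    (Matrix.fromBlocks S (otMap S St * St) (otMap S St * St)ᵀ St).PosSemidef ∧
    (otMap S St * St).trace = (psdSqrt (psdSqrt St * S * psdSqrt St)).trace ∧
    (∀ C : Matrix (Fin d) (Fin d) ℝ,
      (Matrix.fromBlocks S C Cᵀ St).PosSemidef → C.trace ≤ (otMap S St * St).trace) := by
  classical
  have hStp : St.PosSemidef := hSt.posSemidef
  set R : Matrix (Fin d) (Fin d) ℝ := psdSqrt St with hRdef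
  have hRps : R.PosSemidef := by
    rw [hRdef]; unfold psdSqrt; rw [dif_pos hStp]; exact OTAux.psdSqrt_psd' hStp
  have hRR : R * R = St := by
    rw [hRdef]; unfold psdSqrt; rw [dif_pos hStp]; exact OTAux.psdSqrt_sq' hStp
  have hRH : Rᴴ = R := hRps.isHermitian
  have hRsym : Rᵀ = R := by
    rw [← Matrix.conjTranspose_eq_transpose_of_trivial]; exact hRH
  have hRdetU : IsUnit R.det := by
    have h2 : R.det * R.det = St.det := by rw [← Matrix.det_mul, hRR]
    have h3 := hSt.det_pos
    exact isUnit_iff_ne_zero.mpr (fun h0 => by rw [h0, mul_zero] at h2; linarith)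
  have hRinv : R * R⁻¹ = 1 := Matrix.mul_nonsing_inv R hRdetU
  have hRinv' : R⁻¹ * R = 1 := Matrix.nonsing_inv_mul R hRdetU
  have hRinvT : (R⁻¹)ᵀ = R⁻¹ := by rw [Matrix.transpose_nonsing_inv, hRsym]
  have hMps : (R * S * R).PosSemidef := by
    have := hS.conjTranspose_mul_mul_same R
    rwa [hRH] at this
  set Q : Matrix (Fin d) (Fin d) ℝ := psdSqrt (R * S * R) with hQdef
  have hQps : Q.PosSemidef := by
    rw [hQdef]; unfold psdSqrt; rw [dif_pos hMps]; exact OTAux.psdSqrt_psd' hMps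
  have hQQ : Q * Q = R * S * R := by
    rw [hQdef]; unfold psdSqrt; rw [dif_pos hMps]; exact OTAux.psdSqrt_sq' hMps
  have hQsym : Qᵀ = Q := by
    rw [← Matrix.conjTranspose_eq_transpose_of_trivial]; exact hQps.isHermitian
  have hCstar : otMap S St * St = R⁻¹ * Q * R := by
    unfold otMap
    rw [← hRdef, ← hQdef, ← hRR]
    simp only [Matrix.mul_assoc]
    rw [← Matrix.mul_assoc R⁻¹ R R, hRinv', Matrix.one_mul]
  have hCT : (R⁻¹ * Q * R)ᵀ = R * Q * R⁻¹ := by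
    rw [Matrix.transpose_mul, Matrix.transpose_mul, hRsym, hQsym, hRinvT, Matrix.mul_assoc]
  have htrQ : (otMap S St * St).trace = Q.trace := by
    rw [hCstar, Matrix.trace_mul_cycle, hRinv, Matrix.one_mul]
  refine ⟨?_, ?_, ?_⟩
  · -- block PSD
    rw [hCstar, hCT]
    have hQRT : (Q * R⁻¹)ᴴ = R⁻¹ * Q := by
      rw [Matrix.conjTranspose_eq_transpose_of_trivial, Matrix.transpose_mul, hRinvT, hQsym]
    have e11 : R⁻¹ * Q * (Q * R⁻¹) = S := by
      have h1 : R⁻¹ * Q * (Q * R⁻¹) = R⁻¹ * (Q * Q) * R⁻¹ := by simp only [Matrix.mul_assoc]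
      rw [h1, hQQ]
      simp only [Matrix.mul_assoc]
      rw [hRinv, Matrix.mul_one, ← Matrix.mul_assoc, hRinv', Matrix.one_mul]
    have key : (Matrix.fromBlocks (Q * R⁻¹) R 0 0)ᴴ * Matrix.fromBlocks (Q * R⁻¹) R 0 0
        = Matrix.fromBlocks S (R⁻¹ * Q * R) (R * Q * R⁻¹) St := by
      rw [Matrix.fromBlocks_conjTranspose, Matrix.fromBlocks_multiply, hQRT, hRH]
      simp only [Matrix.conjTranspose_zero, Matrix.mul_zero, Matrix.zero_mul, add_zero]
      rw [e11, hRR, ← Matrix.mul_assoc R Q R⁻¹]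
    rw [← key]
    exact Matrix.posSemidef_conjTranspose_mul_self _
  · exact htrQ
  · intro C hC
    rw [htrQ]
    refine le_of_forall_pos_le_add fun ε hε => ?_
    set δ : ℝ := ε / (d + 1) with hδdef
    have hδ : 0 < δ := by positivity
    have hQh : Q.IsHermitian := hQps.isHermitian
    set U : Matrix (Fin d) (Fin d) ℝ := (hQh.eigenvectorUnitary : Matrix (Fin d) (Fin d) ℝ)
      with hUdef
    set μ : Fin d → ℝ := hQh.eigenvalues with hμdef
    have hμnn : ∀ i, 0 ≤ μ i := fun i => hQps.eigenvalues_nonneg i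
    have hU1 : U * Uᵀ = 1 := by
      have := Matrix.mem_unitaryGroup_iff.mp hQh.eigenvectorUnitary.2
      rwa [Matrix.star_eq_conjTranspose, Matrix.conjTranspose_eq_transpose_of_trivial] at this
    have hU2 : Uᵀ * U = 1 := by
      have := Matrix.mem_unitaryGroup_iff'.mp hQh.eigenvectorUnitary.2
      rwa [Matrix.star_eq_conjTranspose, Matrix.conjTranspose_eq_transpose_of_trivial] at this
    have hQspec : Q = OTAux.specF U μ id := by
      have hs := hQh.spectral_theorem
      rw [Unitary.conjStarAlgAut_apply, Matrix.star_eq_conjTranspose,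
        Matrix.conjTranspose_eq_transpose_of_trivial] at hs
      rw [hs]
      unfold OTAux.specF
      congr 1
    set f : ℝ → ℝ := fun x => (Real.sqrt (x + δ))⁻¹ with hfdef
    set g : ℝ → ℝ := fun x => Real.sqrt (x + δ) with hgdef
    set A : Matrix (Fin d) (Fin d) ℝ := OTAux.specF U μ f with hA
    set B : Matrix (Fin d) (Fin d) ℝ := OTAux.specF U μ g with hB
    have hpos : ∀ i, 0 < Real.sqrt (μ i + δ) := fun i =>
      Real.sqrt_pos.mpr (by have := hμnn i; linarith)
    have hBA : B * A = 1 := by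
      rw [hB, hA, OTAux.specF_mul hU2]
      rw [OTAux.specF_congr (U := U) (μ := μ) (f := fun x => g x * f x) (g := fun _ => 1)
        (fun i => mul_inv_cancel₀ (hpos i).ne')]
      exact OTAux.specF_one hU1
    have hAB : A * B = 1 := by
      rw [hB, hA, OTAux.specF_mul hU2]
      rw [OTAux.specF_congr (U := U) (μ := μ) (f := fun x => f x * g x) (g := fun _ => 1)
        (fun i => inv_mul_cancel₀ (hpos i).ne')]
      exact OTAux.specF_one hU1
    have hAsym : Aᵀ = A := by rw [hA]; exact OTAux.specF_transpose f
    have hBsym : Bᵀ = B := by rw [hB]; exact OTAux.specF_transpose g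
    set V : Matrix (Fin d) (Fin d) ℝ := R * A with hV
    set W : Matrix (Fin d) (Fin d) ℝ := R⁻¹ * B with hW
    have hVT : Vᵀ = A * R := by rw [hV, Matrix.transpose_mul, hAsym, hRsym]
    have hWT : Wᵀ = B * R⁻¹ := by rw [hW, Matrix.transpose_mul, hBsym, hRinvT]
    have hWV : W * Vᵀ = 1 := by
      rw [hVT, hW]
      have h1 : R⁻¹ * B * (A * R) = R⁻¹ * (B * A) * R := by simp only [Matrix.mul_assoc]
      rw [h1, hBA, Matrix.mul_one, hRinv']
    have hVW : V * Wᵀ = 1 := by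
      rw [hWT, hV]
      have h1 : R * A * (B * R⁻¹) = R * (A * B) * R⁻¹ := by simp only [Matrix.mul_assoc]
      rw [h1, hAB, Matrix.mul_one, hRinv]
    have hXps := hC.conjTranspose_mul_mul_same ((Matrix.fromBlocks V 0 (-W) 0 : Matrix (Fin d ⊕ Fin d) (Fin d ⊕ Fin d) ℝ))
    have h0 := OTAux.psd_trace_nonneg hXps
    have hexp : (((Matrix.fromBlocks V 0 (-W) 0 : Matrix (Fin d ⊕ Fin d) (Fin d ⊕ Fin d) ℝ))ᴴ *
        Matrix.fromBlocks S C Cᵀ St *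
        (Matrix.fromBlocks V 0 (-W) 0 : Matrix (Fin d ⊕ Fin d) (Fin d ⊕ Fin d) ℝ)).trace
        = (Vᵀ * S * V).trace + (Wᵀ * St * W).trace - 2 * C.trace := by
      rw [Matrix.fromBlocks_conjTranspose, Matrix.fromBlocks_multiply, Matrix.fromBlocks_multiply,
        OTAux.trace_fromBlocks']
      simp only [Matrix.conjTranspose_zero, Matrix.conjTranspose_neg,
        Matrix.conjTranspose_eq_transpose_of_trivial, Matrix.zero_mul, Matrix.mul_zero,
        Matrix.neg_mul, Matrix.mul_neg, add_zero, zero_add, Matrix.trace_add, Matrix.trace_neg,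
        Matrix.trace_zero, Matrix.trace_sub, neg_neg, Matrix.add_mul, Matrix.mul_add,
        Matrix.transpose_neg]
      have htr1 : (Vᵀ * C * W).trace = C.trace := by
        rw [Matrix.trace_mul_comm, ← Matrix.mul_assoc, hWV, Matrix.one_mul]
      have htr2 : (Wᵀ * Cᵀ * V).trace = C.trace := by
        rw [Matrix.trace_mul_comm, ← Matrix.mul_assoc, hVW, Matrix.one_mul,
          Matrix.trace_transpose]
      rw [htr1, htr2]
      ring
    have hVSVle : (Vᵀ * S * V).trace ≤ ∑ i, μ i := by
      have e1 : Vᵀ * S * V = A * (Q * Q) * A := by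
        rw [hVT, hV, hQQ]
        simp only [Matrix.mul_assoc]
      rw [e1, hQspec, hA, OTAux.specF_mul hU2, OTAux.specF_mul hU2, OTAux.specF_mul hU2,
        OTAux.specF_trace hU2]
      refine Finset.sum_le_sum fun i _ => ?_
      simp only [hfdef, id]
      have hs := Real.mul_self_sqrt (show (0:ℝ) ≤ μ i + δ by have := hμnn i; linarith)
      have hp := hpos i
      have key : (Real.sqrt (μ i + δ))⁻¹ * (μ i * μ i) * (Real.sqrt (μ i + δ))⁻¹
          = (μ i * μ i) / (μ i + δ) := by
        have hinv : (μ i + δ)⁻¹ = (Real.sqrt (μ i + δ))⁻¹ * (Real.sqrt (μ i + δ))⁻¹ := by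
          rw [← mul_inv, hs]
        rw [div_eq_mul_inv, hinv]; ring
      rw [key, div_le_iff₀ (by have := hμnn i; positivity)]
      nlinarith [hμnn i, hδ.le]
    have hWStW : (Wᵀ * St * W).trace = (∑ i, μ i) + (d : ℝ) * δ := by
      have e2 : Wᵀ * St * W = B * B := by
        rw [hWT, hW, ← hRR]
        have h1 : B * R⁻¹ * (R * R) * (R⁻¹ * B) = B * ((R⁻¹ * R) * ((R * R⁻¹) * B)) := by
          simp only [Matrix.mul_assoc]
        rw [h1, hRinv', hRinv, Matrix.one_mul, Matrix.one_mul]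
      rw [e2, hB, OTAux.specF_mul hU2, OTAux.specF_trace hU2]
      have : ∀ i ∈ Finset.univ, g (μ i) * g (μ i) = μ i + δ := fun i _ =>
        Real.mul_self_sqrt (by have := hμnn i; linarith)
      rw [Finset.sum_congr rfl this, Finset.sum_add_distrib, Finset.sum_const,
        Finset.card_univ, Fintype.card_fin, nsmul_eq_mul]
    have htrQsum : Q.trace = ∑ i, μ i := by
      rw [hQspec, OTAux.specF_trace hU2]
      simp [id]
    have hδd : (d : ℝ) * δ ≤ ε := by
      rw [hδdef]
      rw [mul_div_assoc']
      rw [div_le_iff₀ (by positivity)]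
      nlinarith [hε.le, Nat.cast_nonneg (α := ℝ) d]
    rw [hexp] at h0
    rw [htrQsum]
    linarith [hVSVle, hWStW, hδd, h0]
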